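/- Let k be a field and σ the k-automorphism of the rational function field k(x₁,…,x_{n-1}) determined by σ(x₁) = x₂, σ(x₂) = x₃, …, σ(x_{n-2}) = x_{n-1}, σ(x_{n-1}) = 1/(x₁x₂⋯x_{n-1}). Then there exist y₁,…,y_{n-1} ∈ k(x₁,…,x_{n-1}) such that k(x₁,…,x_{n-1}) = k(y₁,…,y_{n-1}) and σ(y₁) = y₂, …, σ(y_{n-2}) = y_{n-1}, σ(y_{n-1}) = 1 − (y₁ + ⋯ + y_{n-1}). -/

import Mathlib

set_option maxHeartbeats 1000000
set_option synthInstance.maxHeartbeats 400000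

lemma adjoin_range_X_top (k : Type*) [Field k] (ι : Type*) :
    IntermediateField.adjoin k (Set.range (fun i : ι =>
      algebraMap (MvPolynomial ι k) (FractionRing (MvPolynomial ι k)) (MvPolynomial.X i))) = ⊤ := by
  classical
  set K := FractionRing (MvPolynomial ι k)
  set F := IntermediateField.adjoin k (Set.range (fun i : ι =>
      algebraMap (MvPolynomial ι k) K (MvPolynomial.X i))) with hF
  rw [eq_top_iff]
  rintro z -
  have key : ∀ p : MvPolynomial ι k, algebraMap (MvPolynomial ι k) K p ∈ F := by
    intro p
    have hp : p ∈ Algebra.adjoin k (Set.range MvPolynomial.X) := by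
      rw [MvPolynomial.adjoin_range_X]; trivial
    induction hp using Algebra.adjoin_induction with
    | mem a ha =>
      obtain ⟨i, rfl⟩ := ha
      exact IntermediateField.subset_adjoin _ _ ⟨i, rfl⟩
    | algebraMap r =>
      rw [← IsScalarTower.algebraMap_apply]
      exact F.algebraMap_mem r
    | add a b _ _ ha hb => rw [map_add]; exact F.add_mem ha hb
    | mul a b _ _ ha hb => rw [map_mul]; exact F.mul_mem ha hb
  obtain ⟨p, q, hq, rfl⟩ := IsFractionRing.div_surjective (A := MvPolynomial ι k) z
  exact F.div_mem (key p) (key q)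

theorem stmt1 (k : Type*) [Field k] (n : ℕ) (hn : 2 ≤ n)
    (x : Fin (n - 1) → FractionRing (MvPolynomial (Fin (n - 1)) k))
    (hx : ∀ i, x i = algebraMap (MvPolynomial (Fin (n - 1)) k)
      (FractionRing (MvPolynomial (Fin (n - 1)) k)) (MvPolynomial.X i))
    (σ : FractionRing (MvPolynomial (Fin (n - 1)) k) ≃ₐ[k]
         FractionRing (MvPolynomial (Fin (n - 1)) k))
    (hσ : ∀ i j : Fin (n - 1), (j : ℕ) = (i : ℕ) + 1 → σ (x i) = x j)
    (hσlast : ∀ i : Fin (n - 1), (i : ℕ) = n - 2 → σ (x i) = (∏ j, x j)⁻¹) :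
    ∃ y : Fin (n - 1) → FractionRing (MvPolynomial (Fin (n - 1)) k),
      IntermediateField.adjoin k (Set.range y) = ⊤ ∧
      (∀ i j : Fin (n - 1), (j : ℕ) = (i : ℕ) + 1 → σ (y i) = y j) ∧
      (∀ i : Fin (n - 1), (i : ℕ) = n - 2 → σ (y i) = 1 - ∑ j, y j) := by
  classical
  have hm : 1 ≤ n - 1 := by omega
  set A : MvPolynomial (Fin (n - 1)) k →+* FractionRing (MvPolynomial (Fin (n - 1)) k) :=
    algebraMap _ _ with hAdef
  have hAinj : Function.Injective A :=
    IsFractionRing.injective (MvPolynomial (Fin (n - 1)) k) (FractionRing (MvPolynomial (Fin (n - 1)) k))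
  -- the extended variables as polynomials
  set XX : ℕ → MvPolynomial (Fin (n - 1)) k :=
    fun i => if h : i < n - 1 then MvPolynomial.X ⟨i, h⟩ else 1 with hXXdef
  set xx : ℕ → FractionRing (MvPolynomial (Fin (n - 1)) k) := fun i => A (XX i) with hxxdef
  have hxx : ∀ i : Fin (n - 1), xx i = x i := by
    intro i
    simp only [hxxdef, hXXdef, i.isLt, dif_pos, Fin.eta]
    exact (hx i).symm
  have hXXne : ∀ i, XX i ≠ 0 := by
    intro i
    by_cases h : i < n - 1
    · simp only [hXXdef, dif_pos h]
      exact MvPolynomial.X_ne_zero _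
    · simp [hXXdef, h]
  -- partial products
  set Wp : ℕ → MvPolynomial (Fin (n - 1)) k := fun i => ∏ j ∈ Finset.range i, XX j with hWpdef
  set w : ℕ → FractionRing (MvPolynomial (Fin (n - 1)) k) := fun i => A (Wp i) with hwdef
  have hWpne : ∀ i, Wp i ≠ 0 := by
    intro i
    exact Finset.prod_ne_zero_iff.mpr fun j _ => hXXne j
  have hwne : ∀ i, w i ≠ 0 := by
    intro i h
    exact hWpne i (hAinj (by rw [map_zero]; exact h))
  have hw : ∀ i, w i = ∏ j ∈ Finset.range i, xx j := by
    intro i; simp [hwdef, hWpdef, hxxdef, map_prod]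
  have hw0 : w 0 = 1 := by simp [hw]
  have hwsucc : ∀ i, w (i + 1) = w i * xx i := by
    intro i; rw [hw, hw, Finset.prod_range_succ]
  have hxxne : ∀ i, xx i ≠ 0 := by
    intro i h
    exact hXXne i (hAinj (by rw [map_zero]; exact h))
  -- action of σ
  have hσxx : ∀ i : ℕ, i + 1 < n - 1 → σ (xx i) = xx (i + 1) := by
    intro i h
    rw [hxx ⟨i, by omega⟩, hxx ⟨i + 1, h⟩]
    exact hσ ⟨i, by omega⟩ ⟨i + 1, h⟩ rfl
  have hprodx : ∏ j, x j = w (n - 1) := by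
    rw [hw, ← Fin.prod_univ_eq_prod_range (fun j => xx j)]
    exact Finset.prod_congr rfl fun j _ => (hxx j).symm
  have hσlast' : σ (xx (n - 2)) = (w (n - 1))⁻¹ := by
    rw [hxx ⟨n - 2, by omega⟩, ← hprodx]
    exact hσlast ⟨n - 2, by omega⟩ rfl
  have hσw1 : ∀ i, i ≤ n - 2 → σ (w i) = w (i + 1) * (xx 0)⁻¹ := by
    intro i hi
    rw [hw, map_prod]
    have h1 : ∀ j ∈ Finset.range i, σ (xx j) = xx (j + 1) := by
      intro j hj
      rw [Finset.mem_range] at hj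
      exact hσxx j (by omega)
    rw [Finset.prod_congr rfl h1, hw, Finset.prod_range_succ']
    rw [mul_assoc, mul_inv_cancel₀ (hxxne 0), mul_one]
  have hσwm : σ (w (n - 1)) = (xx 0)⁻¹ := by
    have h3 : n - 2 + 1 = n - 1 := by omega
    have h2 : w (n - 1) = w (n - 2) * xx (n - 2) := by rw [← hwsucc, h3]
    rw [h2, map_mul, hσw1 (n - 2) le_rfl, hσlast', h3]
    rw [mul_comm (w (n - 1)) ((xx 0)⁻¹), mul_assoc, mul_inv_cancel₀ (hwne _), mul_one]
  -- the sum S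
  set S : FractionRing (MvPolynomial (Fin (n - 1)) k) :=
    ∑ i ∈ Finset.range (n - 1 + 1), w i with hSdef
  have hSne : S ≠ 0 := by
    have hS : S = A (∑ i ∈ Finset.range (n - 1 + 1), Wp i) := by
      rw [map_sum, hSdef]
    have hc : MvPolynomial.constantCoeff (∑ i ∈ Finset.range (n - 1 + 1), Wp i) = 1 := by
      rw [map_sum, Finset.sum_eq_single 0]
      · simp [hWpdef]
      · intro i _ hi
        rw [hWpdef]
        simp only
        rw [map_prod]
        apply Finset.prod_eq_zero (Finset.mem_range.mpr (Nat.pos_of_ne_zero hi))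
        simp [hXXdef, show (1:ℕ) < n by omega]
      · intro h; simp at h
    intro h
    rw [hS] at h
    have h2 := hAinj (h.trans (map_zero A).symm)
    rw [h2] at hc
    simp at hc
  have hσS : σ S = S * (xx 0)⁻¹ := by
    rw [hSdef, map_sum, Finset.sum_range_succ]
    have h1 : ∀ i ∈ Finset.range (n - 1), σ (w i) = w (i + 1) * (xx 0)⁻¹ := by
      intro i hi
      rw [Finset.mem_range] at hi
      exact hσw1 i (by omega)
    rw [Finset.sum_congr rfl h1, hσwm, ← Finset.sum_mul, Finset.sum_range_succ' w (n - 1),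
      hw0, add_mul, one_mul]
  -- the new basis
  set y : Fin (n - 1) → FractionRing (MvPolynomial (Fin (n - 1)) k) :=
    fun i => w ((i : ℕ) + 1) * S⁻¹ with hydef
  have hσSinv : σ S⁻¹ = S⁻¹ * xx 0 := by
    rw [map_inv₀, hσS, mul_inv, inv_inv]
  have hycond2 : ∀ i j : Fin (n - 1), (j : ℕ) = (i : ℕ) + 1 → σ (y i) = y j := by
    intro i j hji
    have hj : (j : ℕ) < n - 1 := j.isLt
    rw [hydef]
    simp only
    rw [map_mul, hσSinv, hσw1 ((i : ℕ) + 1) (by omega), hji]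
    rw [mul_comm S⁻¹ (xx 0), ← mul_assoc, mul_assoc (w ((i:ℕ)+1+1)) ((xx 0)⁻¹) (xx 0),
      inv_mul_cancel₀ (hxxne 0), mul_one]
  have hsumy : ∑ j, y j = (S - 1) * S⁻¹ := by
    have h2 : S = (∑ i ∈ Finset.range (n - 1), w (i + 1)) + w 0 := by
      rw [hSdef, Finset.sum_range_succ']
    have h1 : ∑ j : Fin (n - 1), w ((j : ℕ) + 1) = S - 1 := by
      rw [Fin.sum_univ_eq_sum_range (fun i => w (i + 1)) (n - 1), h2, hw0]; ring
    rw [hydef]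
    simp only
    rw [← Finset.sum_mul, h1]
  have hSinvmem : (1 : FractionRing (MvPolynomial (Fin (n - 1)) k)) - ∑ j, y j = S⁻¹ := by
    rw [hsumy]
    field_simp
    ring
  have hycond3 : ∀ i : Fin (n - 1), (i : ℕ) = n - 2 → σ (y i) = 1 - ∑ j, y j := by
    intro i hi
    rw [hSinvmem, hydef]
    simp only
    rw [map_mul, hσSinv, hi]
    have h1 : n - 2 + 1 = n - 1 := by omega
    rw [h1, hσwm, mul_comm S⁻¹ (xx 0), ← mul_assoc, inv_mul_cancel₀ (hxxne 0), one_mul]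
  refine ⟨y, ?_, hycond2, hycond3⟩
  -- generation
  set F := IntermediateField.adjoin k (Set.range y) with hFdef
  have hyF : ∀ i, y i ∈ F := fun i =>
    IntermediateField.subset_adjoin _ _ ⟨i, rfl⟩
  have hSinvF : S⁻¹ ∈ F := by
    rw [← hSinvmem]
    exact F.sub_mem F.one_mem (sum_mem fun j _ => hyF j)
  have hSF : S ∈ F := by
    have := F.inv_mem hSinvF
    rwa [inv_inv] at this
  have hwF : ∀ i : ℕ, i ≤ n - 1 → w i ∈ F := by
    intro i hi
    match i with
    | 0 => rw [hw0]; exact F.one_mem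
    | (j + 1) =>
      have hj : j < n - 1 := by omega
      have h1 : w (j + 1) = y ⟨j, hj⟩ * S := by
        rw [hydef]; simp only
        rw [mul_assoc, inv_mul_cancel₀ hSne, mul_one]
      rw [h1]
      exact F.mul_mem (hyF _) hSF
  have hxF : ∀ i : Fin (n - 1), x i ∈ F := by
    intro i
    have h1 : x i = w ((i : ℕ) + 1) * (w i)⁻¹ := by
      rw [hwsucc, hxx, mul_comm (w (i : ℕ)) (x i), mul_assoc,
        mul_inv_cancel₀ (hwne (i : ℕ)), mul_one]
    rw [h1]
    exact F.mul_mem (hwF _ i.isLt) (F.inv_mem (hwF _ (Nat.le_of_lt i.isLt)))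
  rw [eq_top_iff]
  have htop : IntermediateField.adjoin k (Set.range x) = ⊤ := by
    have h2 := adjoin_range_X_top k (Fin (n - 1))
    rw [← h2]
    congr 1
    ext z
    constructor
    · rintro ⟨i, rfl⟩; exact ⟨i, by rw [hx]⟩
    · rintro ⟨i, rfl⟩; exact ⟨i, by rw [hx]⟩
  rw [← htop]
  exact IntermediateField.adjoin_le_iff.mpr (Set.range_subset_iff.mpr hxF)
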